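/- Let ℓ > 0 and t : [0, ℓ/2] → R be C¹ with t(0) = 0. Define D(t) = ∫₀^{ℓ/2} |sin θ(s)| · √(1 + t'(s)²) ds, where θ(s) is the angle between the normal (−t'(s), 1)/√(1+t'(s)²) and the radial unit vector (s, t(s))/√(s² + t(s)²) (for (s,t(s)) ≠ 0). Then D(t) ≥ ℓ/2, with equality attained by t ≡ 0. -/

import Mathlib

open InnerProductGeometry in
lemma key_aux (s y d : ℝ) (hs : 0 < s) :
    |Real.sin (angle
        ((Real.sqrt (1 + d ^ 2))⁻¹ • (WithLp.equiv 2 (Fin 2 → ℝ)).symm ![-d, 1])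
        ((Real.sqrt (s ^ 2 + y ^ 2))⁻¹ • (WithLp.equiv 2 (Fin 2 → ℝ)).symm ![s, y]))| *
      Real.sqrt (1 + d ^ 2)
    = |s + y * d| / Real.sqrt (s ^ 2 + y ^ 2) := by
  have hc : 0 < Real.sqrt (1 + d ^ 2) := Real.sqrt_pos.2 (by positivity)
  have hd : 0 < Real.sqrt (s ^ 2 + y ^ 2) := Real.sqrt_pos.2 (by positivity)
  set a : EuclideanSpace ℝ (Fin 2) := (WithLp.equiv 2 (Fin 2 → ℝ)).symm ![-d, 1] with ha
  set b : EuclideanSpace ℝ (Fin 2) := (WithLp.equiv 2 (Fin 2 → ℝ)).symm ![s, y] with hb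
  rw [angle_smul_left_of_pos _ _ (inv_pos.2 hc), angle_smul_right_of_pos _ _ (inv_pos.2 hd)]
  have hia : (inner ℝ a a : ℝ) = 1 + d ^ 2 := by
    simp [PiLp.inner_apply, Fin.sum_univ_two, ha, RCLike.inner_apply, EuclideanSpace.norm_eq]; rw [Real.sq_sqrt (by positivity)]; ring
  have hib : (inner ℝ b b : ℝ) = s ^ 2 + y ^ 2 := by
    simp [PiLp.inner_apply, Fin.sum_univ_two, hb, RCLike.inner_apply, EuclideanSpace.norm_eq]; rw [Real.sq_sqrt (by positivity)]
  have hiab : (inner ℝ a b : ℝ) = y - d * s := by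
    simp [PiLp.inner_apply, Fin.sum_univ_two, ha, hb, RCLike.inner_apply]; ring
  have hna : ‖a‖ = Real.sqrt (1 + d ^ 2) := by
    rw [← Real.sqrt_sq (norm_nonneg a), ← real_inner_self_eq_norm_sq, hia]
  have hnb : ‖b‖ = Real.sqrt (s ^ 2 + y ^ 2) := by
    rw [← Real.sqrt_sq (norm_nonneg b), ← real_inner_self_eq_norm_sq, hib]
  have hsin := sin_angle_mul_norm_mul_norm a b
  rw [hia, hib, hiab, hna, hnb] at hsin
  have hval : (1 + d ^ 2) * (s ^ 2 + y ^ 2) - (y - d * s) * (y - d * s) = (s + y * d) ^ 2 := by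
    ring
  rw [hval, Real.sqrt_sq_eq_abs] at hsin
  rw [abs_of_nonneg (Real.sin_nonneg_of_nonneg_of_le_pi (angle_nonneg a b) (angle_le_pi a b))]
  field_simp at hsin ⊢
  nlinarith [hsin, hc, hd]

theorem stmt_14 (ℓ : ℝ) (hℓ : 0 < ℓ) (t : ℝ → ℝ) (ht : ContDiff ℝ 1 t)
    (h0 : t 0 = 0) :
    (∫ s in (0 : ℝ)..(ℓ / 2),
        |Real.sin (InnerProductGeometry.angle
            ((Real.sqrt (1 + deriv t s ^ 2))⁻¹ •
              (WithLp.equiv 2 (Fin 2 → ℝ)).symm ![-(deriv t s), 1])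
            ((Real.sqrt (s ^ 2 + t s ^ 2))⁻¹ •
              (WithLp.equiv 2 (Fin 2 → ℝ)).symm ![s, t s]))| *
          Real.sqrt (1 + deriv t s ^ 2))
      ≥ ℓ / 2 ∧
    ((∀ s ∈ Set.Icc (0 : ℝ) (ℓ / 2), t s = 0) →
      (∫ s in (0 : ℝ)..(ℓ / 2),
        |Real.sin (InnerProductGeometry.angle
            ((Real.sqrt (1 + deriv t s ^ 2))⁻¹ •
              (WithLp.equiv 2 (Fin 2 → ℝ)).symm ![-(deriv t s), 1])
            ((Real.sqrt (s ^ 2 + t s ^ 2))⁻¹ •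
              (WithLp.equiv 2 (Fin 2 → ℝ)).symm ![s, t s]))| *
          Real.sqrt (1 + deriv t s ^ 2))
      = ℓ / 2) := by
  set L : ℝ := ℓ / 2 with hLdef
  have hL0 : 0 < L := by positivity
  have htd : Differentiable ℝ t := ht.differentiable one_ne_zero
  have hdc : Continuous (deriv t) := ht.continuous_deriv le_rfl
  have htc : Continuous t := htd.continuous
  set h : ℝ → ℝ := fun s => |s + t s * deriv t s| / Real.sqrt (s ^ 2 + t s ^ 2) with hh
  set g : ℝ → ℝ := fun s => Real.sqrt (s ^ 2 + t s ^ 2) with hg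
  have hgc : Continuous g := (continuous_pow 2 |>.add (htc.pow 2)).sqrt
  have hg0 : g 0 = 0 := by simp [hg, h0]
  -- the integrand coincides with h on (0, L]
  have hkey : ∀ s ∈ Set.uIoc (0 : ℝ) L,
      |Real.sin (InnerProductGeometry.angle
          ((Real.sqrt (1 + deriv t s ^ 2))⁻¹ •
            (WithLp.equiv 2 (Fin 2 → ℝ)).symm ![-(deriv t s), 1])
          ((Real.sqrt (s ^ 2 + t s ^ 2))⁻¹ •
            (WithLp.equiv 2 (Fin 2 → ℝ)).symm ![s, t s]))| *
        Real.sqrt (1 + deriv t s ^ 2) = h s := by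
    intro s hs
    rw [Set.uIoc_of_le hL0.le] at hs
    exact key_aux s (t s) (deriv t s) hs.1
  have hcongr : (∫ s in (0 : ℝ)..L,
      |Real.sin (InnerProductGeometry.angle
          ((Real.sqrt (1 + deriv t s ^ 2))⁻¹ •
            (WithLp.equiv 2 (Fin 2 → ℝ)).symm ![-(deriv t s), 1])
          ((Real.sqrt (s ^ 2 + t s ^ 2))⁻¹ •
            (WithLp.equiv 2 (Fin 2 → ℝ)).symm ![s, t s]))| *
        Real.sqrt (1 + deriv t s ^ 2)) = ∫ s in (0 : ℝ)..L, h s :=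
    intervalIntegral.integral_congr_ae (Filter.Eventually.of_forall hkey)
  -- integrability of h
  have hnonneg : ∀ s, 0 ≤ h s := fun s => by positivity
  have hmeas : Measurable h :=
    ((measurable_id.add (htc.measurable.mul hdc.measurable)).abs).div
      ((measurable_id.pow_const 2 |>.add (htc.measurable.pow_const 2)).sqrt)
  have hbound : ∀ s, h s ≤ Real.sqrt (1 + deriv t s ^ 2) := by
    intro s
    rcases eq_or_lt_of_le (Real.sqrt_nonneg (s ^ 2 + t s ^ 2)) with hz | hz
    · rw [hh]; simp only [← hz, div_zero]; positivity
    · rw [hh, div_le_iff₀ hz]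
      have h1 : |s + t s * deriv t s| =
          Real.sqrt ((s + t s * deriv t s) ^ 2) := (Real.sqrt_sq_eq_abs _).symm
      rw [h1, ← Real.sqrt_mul (by positivity)]
      apply Real.sqrt_le_sqrt
      nlinarith [sq_nonneg (s * deriv t s - t s)]
  have hintB : IntervalIntegrable (fun s => Real.sqrt (1 + deriv t s ^ 2))
      MeasureTheory.volume 0 L :=
    ((continuous_const.add (hdc.pow 2)).sqrt).intervalIntegrable 0 L
  have hint : IntervalIntegrable h MeasureTheory.volume 0 L := by
    apply hintB.mono_fun hmeas.aestronglyMeasurable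
    filter_upwards with s
    rw [Real.norm_eq_abs, Real.norm_eq_abs, abs_of_nonneg (hnonneg s),
      abs_of_nonneg (Real.sqrt_nonneg _)]
    exact hbound s
  -- derivative of g on positive reals
  have hg' : ∀ x : ℝ, 0 < x → HasDerivAt g ((x + t x * deriv t x) / g x) x := by
    intro x hx
    have hne : x ^ 2 + t x ^ 2 ≠ 0 := by positivity
    have h1 : HasDerivAt (fun s => s ^ 2 + t s ^ 2)
        (2 * x + 2 * t x * deriv t x) x := by
      have ha := (hasDerivAt_id x).pow 2
      have hb := ((htd x).hasDerivAt).pow 2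
      refine (ha.add hb).congr_deriv ?_
      simp only [id_eq]; ring
    have h2 := (Real.hasDerivAt_sqrt hne).comp x h1
    refine h2.congr_deriv ?_
    rw [hg]
    have hgx : (0:ℝ) < Real.sqrt (x ^ 2 + t x ^ 2) := Real.sqrt_pos.2 (by positivity)
    field_simp
  -- main estimate for each ε ∈ (0, L]
  have hstep : ∀ ε, 0 < ε → ε ≤ L → g L - g ε ≤ ∫ s in (0 : ℝ)..L, h s := by
    intro ε hε hεL
    have hint1 : IntervalIntegrable h MeasureTheory.volume 0 ε :=
      hint.mono_set (Set.uIcc_subset_uIcc_left (Set.mem_uIcc.2 (Or.inl ⟨hε.le, hεL⟩)))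
    have hint2 : IntervalIntegrable h MeasureTheory.volume ε L :=
      hint.mono_set (Set.uIcc_subset_uIcc_right (Set.mem_uIcc.2 (Or.inl ⟨hε.le, hεL⟩)))
    have hsplit : (∫ s in (0:ℝ)..L, h s) =
        (∫ s in (0:ℝ)..ε, h s) + ∫ s in ε..L, h s :=
      (intervalIntegral.integral_add_adjacent_intervals hint1 hint2).symm
    have h1 : 0 ≤ ∫ s in (0:ℝ)..ε, h s :=
      intervalIntegral.integral_nonneg hε.le (fun s _ => hnonneg s)
    have hgder : ∀ x ∈ Set.uIcc ε L, HasDerivAt g ((x + t x * deriv t x) / g x) x := by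
      intro x hx
      rw [Set.uIcc_of_le hεL] at hx
      exact hg' x (lt_of_lt_of_le hε hx.1)
    have hg'cont : ContinuousOn (fun x => (x + t x * deriv t x) / g x) (Set.uIcc ε L) := by
      apply ContinuousOn.div
      · exact (continuous_id.add (htc.mul hdc)).continuousOn
      · exact hgc.continuousOn
      · intro x hx
        rw [Set.uIcc_of_le hεL] at hx
        have : 0 < x := lt_of_lt_of_le hε hx.1
        exact ne_of_gt (Real.sqrt_pos.2 (by positivity))
    have hg'int : IntervalIntegrable (fun x => (x + t x * deriv t x) / g x)
        MeasureTheory.volume ε L := hg'cont.intervalIntegrable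
    have hftc : (∫ x in ε..L, (x + t x * deriv t x) / g x) = g L - g ε :=
      intervalIntegral.integral_eq_sub_of_hasDerivAt hgder hg'int
    have hmono : (∫ x in ε..L, (x + t x * deriv t x) / g x) ≤ ∫ s in ε..L, h s := by
      apply intervalIntegral.integral_mono_on hεL hg'int hint2
      intro x hx
      have hgx : (0:ℝ) < g x :=
        Real.sqrt_pos.2 (by nlinarith [sq_nonneg (t x), hx.1, hε, sq_nonneg x, mul_pos (lt_of_lt_of_le hε hx.1) (lt_of_lt_of_le hε hx.1)])
      simp only [hh, hg]
      gcongr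
      exact le_abs_self _
    linarith [hsplit ▸ (by linarith [hftc ▸ hmono] : g L - g ε ≤ (∫ s in (0:ℝ)..ε, h s) + ∫ s in ε..L, h s)]
  -- take ε → 0⁺
  have hlim : g L ≤ ∫ s in (0 : ℝ)..L, h s := by
    have htend : Filter.Tendsto (fun ε => g L - g ε) (nhdsWithin 0 (Set.Ioi 0))
        (nhds (g L)) := by
      have : Filter.Tendsto g (nhdsWithin 0 (Set.Ioi 0)) (nhds (g 0)) :=
        (hgc.tendsto 0).mono_left nhdsWithin_le_nhds
      rw [hg0] at this
      simpa using (tendsto_const_nhds.sub this)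
    apply le_of_tendsto htend
    filter_upwards [Ioc_mem_nhdsGT_of_mem (Set.left_mem_Ico.2 hL0)] with ε hε
    exact hstep ε hε.1 hε.2
  have hgL : L ≤ g L := by
    rw [hg]
    calc L = Real.sqrt (L ^ 2) := (Real.sqrt_sq hL0.le).symm
    _ ≤ Real.sqrt (L ^ 2 + t L ^ 2) := Real.sqrt_le_sqrt (by nlinarith [sq_nonneg (t L)])
  constructor
  · rw [hcongr]; exact le_trans hgL hlim
  · intro hz
    rw [hcongr]
    have hone : ∀ s ∈ Set.uIoc (0 : ℝ) L, h s = 1 := by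
      intro s hs
      rw [Set.uIoc_of_le hL0.le] at hs
      have hts : t s = 0 := hz s ⟨hs.1.le, hs.2⟩
      rw [hh]
      simp only [hts, mul_zero, zero_mul, add_zero, mul_zero]
      rw [zero_pow (by norm_num), add_zero, Real.sqrt_sq hs.1.le,
        abs_of_pos hs.1, div_self (ne_of_gt hs.1)]
    rw [intervalIntegral.integral_congr_ae (Filter.Eventually.of_forall hone)]
    simp
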